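/- With q_n defined by N(t)^η = ∑_{n≥0} q_n(η) t^n / x_n!, the functions q_n satisfy the recurrence q_{n+1}(η) = η · (x_{n+1}/(n+1)) · ∑_{k=0}^n (x_n!/(x_k! x_{n-k}!)) · ((n-k+1)/x_{n-k+1}) · q_k(η-1) for all n ≥ 0 and all η. -/

import Mathlib

open PowerSeries Finset

/-- Formal exponential of a power series (intended for series with zero constant term):
coefficientwise `exp F = ∑_k F^k / k!`, which is a finite sum in each coefficient. -/
noncomputable def expS (F : PowerSeries ℝ) : PowerSeries ℝ :=
  PowerSeries.mk fun n => ∑ k ∈ Finset.range (n + 1),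
    (1 / (k.factorial : ℝ)) * PowerSeries.coeff n (F ^ k)

/-- Formal logarithm of a power series (intended for series with constant term 1):
coefficientwise `log N = ∑_{k≥1} (-1)^{k+1} (N-1)^k / k`. -/
noncomputable def logS (N : PowerSeries ℝ) : PowerSeries ℝ :=
  PowerSeries.mk fun n => ∑ k ∈ Finset.range (n + 1),
    ((-1 : ℝ) ^ (k + 1) / (k : ℝ)) * PowerSeries.coeff n ((N - 1) ^ k)

/-- The formal power `N^η := exp (η · log N)`. -/
noncomputable def powS (N : PowerSeries ℝ) (η : ℝ) : PowerSeries ℝ :=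
  expS (η • logS N)

/-- Deformed factorial `x_n! = x_1 x_2 ⋯ x_n`, with `x_0! = 1`. -/
noncomputable def xfac (x : ℕ → ℝ) (n : ℕ) : ℝ := ∏ k ∈ Finset.Icc 1 n, x k

-- basic helpers

lemma coeff_pow_zero {F : PowerSeries ℝ} (h : constantCoeff F = 0) {m k : ℕ} (hk : m < k) :
    coeff m (F ^ k) = 0 := by
  have hd : (X : PowerSeries ℝ) ^ k ∣ F ^ k :=
    pow_dvd_pow_of_dvd (X_dvd_iff.mpr h) k
  exact X_pow_dvd_iff.mp hd m hk

lemma coeff_mul_pow_zero {F C : PowerSeries ℝ} (h : constantCoeff F = 0) {m k : ℕ}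
    (hk : m < k) : coeff m (C * F ^ k) = 0 := by
  have hd : (X : PowerSeries ℝ) ^ k ∣ C * F ^ k :=
    Dvd.dvd.mul_left (pow_dvd_pow_of_dvd (X_dvd_iff.mpr h) k) C
  exact X_pow_dvd_iff.mp hd m hk

lemma coeff_expS (F : PowerSeries ℝ) (n : ℕ) :
    coeff n (expS F) = ∑ k ∈ Finset.range (n + 1),
      (1 / (k.factorial : ℝ)) * coeff n (F ^ k) := by
  simp [expS]

lemma coeff_expS_ext {F : PowerSeries ℝ} (h : constantCoeff F = 0) {n m : ℕ} (hnm : n ≤ m) :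
    coeff n (expS F) = ∑ k ∈ Finset.range (m + 1),
      (1 / (k.factorial : ℝ)) * coeff n (F ^ k) := by
  rw [coeff_expS]
  apply Finset.sum_subset
  · exact Finset.range_subset_range.mpr (by omega)
  · intro k hk hk'
    simp only [Finset.mem_range] at hk hk'
    rw [coeff_pow_zero h (by omega), mul_zero]

lemma constantCoeff_expS (F : PowerSeries ℝ) : constantCoeff (expS F) = 1 := by
  rw [← coeff_zero_eq_constantCoeff_apply, coeff_expS]
  simp

lemma constantCoeff_logS (N : PowerSeries ℝ) : constantCoeff (logS N) = 0 := by
  rw [← coeff_zero_eq_constantCoeff_apply, logS, coeff_mk]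
  simp

lemma coeff_mul_congr {A B C : PowerSeries ℝ} {n : ℕ}
    (h : ∀ i ≤ n, coeff i A = coeff i B) :
    coeff n (A * C) = coeff n (B * C) := by
  rw [coeff_mul, coeff_mul]
  refine Finset.sum_congr rfl fun p hp => ?_
  rw [h p.1 (by have := Finset.HasAntidiagonal.mem_antidiagonal.mp hp; omega)]

lemma coeff_deriv_pow (F : PowerSeries ℝ) (k n : ℕ) :
    coeff (n + 1) (F ^ k) * (n + 1 : ℝ) = k * coeff n (F ^ (k - 1) * d⁄dX ℝ F) := by
  have h := PowerSeries.coeff_derivative (F ^ k) n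
  rw [Derivation.leibniz_pow] at h
  simp only [smul_eq_mul, nsmul_eq_mul, map_mul, map_natCast] at h
  rw [← h, ← map_natCast (C (R := ℝ)) k, coeff_C_mul]

lemma expS_deriv {F : PowerSeries ℝ} (h : constantCoeff F = 0) :
    d⁄dX ℝ (expS F) = d⁄dX ℝ F * expS F := by
  ext n
  rw [PowerSeries.coeff_derivative, coeff_expS, Finset.sum_mul]
  have step : ∀ k ∈ Finset.range (n + 2),
      (1 / (k.factorial : ℝ)) * coeff (n + 1) (F ^ k) * (n + 1 : ℝ)
      = (1 / (k.factorial : ℝ)) * (k * coeff n (F ^ (k - 1) * d⁄dX ℝ F)) := by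
    intro k _
    rw [mul_assoc, coeff_deriv_pow]
  rw [Finset.sum_congr rfl step, Finset.sum_range_succ']
  simp only [Nat.factorial_zero, Nat.cast_zero, zero_mul, mul_zero, add_zero]
  have lhs_eq : ∀ j ∈ Finset.range (n + 1),
      (1 / ((j + 1).factorial : ℝ)) * ((j + 1 : ℕ) * coeff n (F ^ (j + 1 - 1) * d⁄dX ℝ F))
      = (1 / (j.factorial : ℝ)) * coeff n (d⁄dX ℝ F * F ^ j) := by
    intro j _
    have hfac : ((j + 1).factorial : ℝ) = (j + 1 : ℕ) * (j.factorial : ℝ) := by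
      push_cast [Nat.factorial_succ]; ring
    have hj1 : ((j + 1 : ℕ) : ℝ) ≠ 0 := by positivity
    have hjf : ((j.factorial : ℝ)) ≠ 0 := by positivity
    rw [hfac, Nat.add_sub_cancel, mul_comm (F ^ j)]
    field_simp
  rw [Finset.sum_congr rfl lhs_eq]
  -- RHS
  rw [coeff_mul]
  have rhs_eq : ∀ p ∈ Finset.HasAntidiagonal.antidiagonal n,
      coeff p.1 (d⁄dX ℝ F) * coeff p.2 (expS F)
      = ∑ k ∈ Finset.range (n + 1),
          (1 / (k.factorial : ℝ)) * (coeff p.1 (d⁄dX ℝ F) * coeff p.2 (F ^ k)) := by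
    intro p hp
    have hp2 : p.2 ≤ n := by have := Finset.HasAntidiagonal.mem_antidiagonal.mp hp; omega
    rw [coeff_expS_ext h hp2, Finset.mul_sum]
    refine Finset.sum_congr rfl fun k _ => by ring
  rw [Finset.sum_congr rfl rhs_eq, Finset.sum_comm]
  refine Finset.sum_congr rfl fun k _ => ?_
  rw [← Finset.mul_sum, ← coeff_mul]

lemma ode_unique {U P Q : PowerSeries ℝ} (hP : d⁄dX ℝ P = U * P) (hQ : d⁄dX ℝ Q = U * Q)
    (h0 : constantCoeff P = constantCoeff Q) : P = Q := by
  ext n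
  induction n using Nat.strong_induction_on with
  | _ n ih =>
    match n with
    | 0 => simpa [coeff_zero_eq_constantCoeff_apply] using h0
    | n + 1 =>
      have h1 : coeff (n + 1) P * (n + 1 : ℝ) = coeff (n + 1) Q * (n + 1 : ℝ) := by
        rw [← PowerSeries.coeff_derivative, ← PowerSeries.coeff_derivative, hP, hQ,
          coeff_mul, coeff_mul]
        refine Finset.sum_congr rfl fun p hp => ?_
        rw [ih p.2 (by have := Finset.HasAntidiagonal.mem_antidiagonal.mp hp; omega)]
      have hne : ((n : ℝ) + 1) ≠ 0 := by positivity
      exact mul_right_cancel₀ hne h1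

lemma expS_add {F G : PowerSeries ℝ} (hF : constantCoeff F = 0)
    (hG : constantCoeff G = 0) : expS (F + G) = expS F * expS G := by
  refine ode_unique (U := d⁄dX ℝ (F + G)) (expS_deriv (by simp [hF, hG])) ?_ ?_
  · rw [Derivation.leibniz, expS_deriv hF, expS_deriv hG, map_add]
    simp only [smul_eq_mul]
    ring
  · simp [constantCoeff_expS]

lemma logS_deriv {N : PowerSeries ℝ} (hN1 : constantCoeff N = 1) :
    d⁄dX ℝ N = d⁄dX ℝ (logS N) * N := by
  set E := N - 1 with hE
  have hE0 : constantCoeff E = 0 := by simp [hE, hN1]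
  ext n
  -- truncated geometric series
  set S : PowerSeries ℝ := ∑ j ∈ Finset.range (n + 1), (-E) ^ j with hS
  have claim1 : ∀ i ≤ n, coeff i (d⁄dX ℝ (logS N)) = coeff i (d⁄dX ℝ E * S) := by
    intro i hi
    rw [PowerSeries.coeff_derivative, logS, coeff_mk, Finset.sum_mul]
    have step : ∀ k ∈ Finset.range (i + 2),
        ((-1 : ℝ) ^ (k + 1) / (k : ℝ)) * coeff (i + 1) (E ^ k) * (i + 1 : ℝ)
        = ((-1 : ℝ) ^ (k + 1) / (k : ℝ)) * ((k : ℝ) * coeff i (E ^ (k - 1) * d⁄dX ℝ E)) := by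
      intro k _
      rw [mul_assoc, coeff_deriv_pow]
    rw [Finset.sum_congr rfl step, Finset.sum_range_succ']
    simp only [Nat.cast_zero, div_zero, zero_mul, add_zero]
    have lhs_eq : ∀ j ∈ Finset.range (i + 1),
        ((-1 : ℝ) ^ (j + 1 + 1) / ((j + 1 : ℕ) : ℝ)) *
            (((j + 1 : ℕ) : ℝ) * coeff i (E ^ (j + 1 - 1) * d⁄dX ℝ E))
        = (-1 : ℝ) ^ j * coeff i (d⁄dX ℝ E * E ^ j) := by
      intro j _
      have hj1 : ((j + 1 : ℕ) : ℝ) ≠ 0 := by positivity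
      rw [Nat.add_sub_cancel, mul_comm (E ^ j)]
      have : (-1 : ℝ) ^ (j + 1 + 1) = (-1 : ℝ) ^ j := by
        rw [pow_succ, pow_succ]; ring
      rw [this]
      field_simp
    rw [Finset.sum_congr rfl lhs_eq]
    have term : ∀ j : ℕ, coeff i (d⁄dX ℝ E * (-E) ^ j)
        = (-1 : ℝ) ^ j * coeff i (d⁄dX ℝ E * E ^ j) := by
      intro j
      have hC : d⁄dX ℝ E * (-E) ^ j = C ((-1 : ℝ) ^ j) * (d⁄dX ℝ E * E ^ j) := by
        rw [neg_pow, map_pow, map_neg, map_one]; ring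
      rw [hC, coeff_C_mul]
    have hSc : coeff i (d⁄dX ℝ E * S)
        = ∑ j ∈ Finset.range (n + 1), (-1 : ℝ) ^ j * coeff i (d⁄dX ℝ E * E ^ j) := by
      rw [hS, Finset.mul_sum, map_sum]
      exact Finset.sum_congr rfl fun j _ => term j
    rw [hSc]
    refine Finset.sum_subset (Finset.range_subset_range.mpr (by omega)) ?_
    intro j _ hj'
    simp only [Finset.mem_range] at hj'
    rw [coeff_mul_pow_zero hE0 (by omega), mul_zero]
  rw [coeff_mul_congr claim1]
  have hmE0 : constantCoeff (-E) = 0 := by simp [hE0]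
  have hSN : S * N = 1 - (-E) ^ (n + 1) := by
    have h1 : S * (-E - 1) = (-E) ^ (n + 1) - 1 := geom_sum_mul (-E) (n + 1)
    have h2 : -E - 1 = -N := by rw [hE]; ring
    rw [h2, mul_neg] at h1
    linear_combination -h1
  have hgeom : (d⁄dX ℝ E * S) * N = d⁄dX ℝ E - d⁄dX ℝ E * (-E) ^ (n + 1) := by
    rw [mul_assoc, hSN]; ring
  rw [hgeom, map_sub, coeff_mul_pow_zero hmE0 (Nat.lt_succ_self n), sub_zero, hE, map_sub]
  simp

lemma expS_logS {N : PowerSeries ℝ} (hN1 : constantCoeff N = 1) :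
    expS (logS N) = N := by
  refine ode_unique (U := d⁄dX ℝ (logS N)) (expS_deriv (constantCoeff_logS N))
    (logS_deriv hN1) ?_
  rw [constantCoeff_expS, hN1]

lemma powS_deriv {N : PowerSeries ℝ} (hN1 : constantCoeff N = 1) (η : ℝ) :
    d⁄dX ℝ (powS N η) = η • (d⁄dX ℝ N * powS N (η - 1)) := by
  have hL0 := constantCoeff_logS N
  have hsmul0 : ∀ a : ℝ, constantCoeff (a • logS N) = 0 := fun a => by
    rw [← coeff_zero_eq_constantCoeff_apply, map_smul, coeff_zero_eq_constantCoeff_apply, hL0,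
      smul_zero]
  have harg : η • logS N = logS N + (η - 1) • logS N := by module
  have hexp : expS (η • logS N) = expS (logS N) * expS ((η - 1) • logS N) := by
    rw [harg, expS_add hL0 (hsmul0 (η - 1))]
  calc d⁄dX ℝ (powS N η) = d⁄dX ℝ (η • logS N) * expS (η • logS N) := expS_deriv (hsmul0 η)
    _ = η • (d⁄dX ℝ (logS N) * (expS (logS N) * expS ((η - 1) • logS N))) := by
        rw [Derivation.map_smul, smul_mul_assoc, hexp]
    _ = η • (d⁄dX ℝ N * powS N (η - 1)) := by
        rw [← mul_assoc, expS_logS hN1, ← logS_deriv hN1]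
        simp only [powS]

lemma xfac_succ (x : ℕ → ℝ) (n : ℕ) : xfac x (n + 1) = xfac x n * x (n + 1) :=
  Finset.prod_Icc_succ_top (by omega) x

theorem stmt1 (x : ℕ → ℝ) (hx : ∀ n, 1 ≤ n → 0 < x n)
    (N : PowerSeries ℝ) (hN : N = PowerSeries.mk fun n => 1 / xfac x n)
    (q : ℕ → ℝ → ℝ)
    (hq : ∀ n η, q n η = xfac x n * PowerSeries.coeff n (powS N η)) :
    ∀ (n : ℕ) (η : ℝ),
      q (n + 1) η =
        η * (x (n + 1) / (n + 1)) *
          ∑ k ∈ Finset.range (n + 1),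
            (xfac x n / (xfac x k * xfac x (n - k))) *
              ((n - k + 1 : ℝ) / x (n - k + 1)) * q k (η - 1) := by
  have hxpos : ∀ m, 0 < xfac x m :=
    fun m => Finset.prod_pos fun k hk => hx k (Finset.mem_Icc.mp hk).1
  have hxf : ∀ m, xfac x m ≠ 0 := fun m => (hxpos m).ne'
  have hcN : ∀ m, coeff m N = 1 / xfac x m := fun m => by rw [hN, coeff_mk]
  have hN1 : constantCoeff N = 1 := by
    rw [← coeff_zero_eq_constantCoeff_apply, hcN 0]
    simp [xfac]
  intro n η
  have key := congrArg (coeff n) (powS_deriv hN1 η)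
  rw [PowerSeries.coeff_derivative, map_smul, smul_eq_mul, mul_comm (d⁄dX ℝ N), coeff_mul,
    Finset.Nat.sum_antidiagonal_eq_sum_range_succ_mk] at key
  simp only [hq]
  have hterm : ∀ k ∈ Finset.range (n + 1),
      xfac x n / (xfac x k * xfac x (n - k)) * (((n : ℝ) - (k : ℝ) + 1) / x (n - k + 1)) *
        (xfac x k * coeff k (powS N (η - 1)))
      = xfac x n * (coeff k (powS N (η - 1)) * coeff (n - k) (d⁄dX ℝ N)) := by
    intro k hk
    have hkn : k ≤ n := by simp only [Finset.mem_range] at hk; omega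
    have hcast : ((n - k : ℕ) : ℝ) = (n : ℝ) - (k : ℝ) := by
      push_cast [hkn]; ring
    rw [PowerSeries.coeff_derivative, hcN, hcast, xfac_succ]
    have h1 := hxf k
    have h2 := hxf (n - k)
    have h3 : x (n - k + 1) ≠ 0 := (hx _ (by omega)).ne'
    field_simp
  rw [Finset.sum_congr rfl hterm, ← Finset.mul_sum]
  have hn1 : ((n : ℝ) + 1) ≠ 0 := by positivity
  rw [xfac_succ]
  field_simp
  linear_combination (xfac x n * x (n + 1)) * key
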